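/- arXiv:2112.06491 — 2 statements merged into one kernel-verified Lean document; each statement's English description precedes it below -/
import Mathlib

section
/- Let F be a field and k = F((t)) with ring of integers O = F[[t]]. The residue pairing O × (Ω¹_k / Ω¹_O) → F, (f, ω) ↦ Res(f ω), is nondegenerate: if f ∈ O satisfies Res(f ω) = 0 for all ω ∈ Ω¹_k, then f = 0; and if ω ∈ Ω¹_k satisfies Res(f ω) = 0 for all f ∈ O, then ω ∈ Ω¹_O (i.e. ω has no polar part). -/
theorem statement_3 (F : Type) [Field F] :
    (∀ f : PowerSeries F,
        (∀ g : LaurentSeries F, ((HahnSeries.ofPowerSeries ℤ F f) * g).coeff (-1) = 0) →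
        f = 0)
      ∧ (∀ g : LaurentSeries F,
          (∀ f : PowerSeries F, ((HahnSeries.ofPowerSeries ℤ F f) * g).coeff (-1) = 0) →
          ∃ h : PowerSeries F, g = HahnSeries.ofPowerSeries ℤ F h) := by
  constructor
  · intro f hf
    ext n
    have h := hf (HahnSeries.single (-(n : ℤ) - 1) 1)
    have key : ((HahnSeries.ofPowerSeries ℤ F f) *
        HahnSeries.single (-(n : ℤ) - 1) 1).coeff ((n : ℤ) + (-(n : ℤ) - 1))
        = (HahnSeries.ofPowerSeries ℤ F f).coeff (n : ℤ) * 1 :=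
      HahnSeries.coeff_mul_single_add
    rw [show ((n : ℤ) + (-(n : ℤ) - 1)) = -1 by ring] at key
    rw [h, mul_one, HahnSeries.ofPowerSeries_apply_coeff] at key
    simpa using key.symm
  · intro g hg
    have hneg : ∀ m : ℕ, g.coeff (-1 - (m : ℤ)) = 0 := by
      intro m
      have h := hg (PowerSeries.X ^ m)
      rw [HahnSeries.ofPowerSeries_X_pow] at h
      have key : ((HahnSeries.single (m : ℤ) (1 : F)) * g).coeff ((-1 - (m : ℤ)) + (m : ℤ))
          = 1 * g.coeff (-1 - (m : ℤ)) := HahnSeries.coeff_single_mul_add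
      rw [show ((-1 - (m : ℤ)) + (m : ℤ)) = -1 by ring, h, one_mul] at key
      exact key.symm
    by_cases hg0 : g = 0
    · exact ⟨0, by simp [hg0]⟩
    · have horder : 0 ≤ g.order := by
        by_contra hlt
        push_neg at hlt
        have := mt HahnSeries.coeff_order_eq_zero.mp hg0
        obtain ⟨m, hm⟩ : ∃ m : ℕ, g.order = -1 - (m : ℤ) := by
          refine ⟨(-1 - g.order).toNat, ?_⟩
          omega
        rw [hm] at this
        exact this (hneg m)
      refine ⟨PowerSeries.X ^ g.order.natAbs * g.powerSeriesPart, ?_⟩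
      have := LaurentSeries.X_order_mul_powerSeriesPart
        (f := g) (n := g.order.natAbs) (by omega)
      exact this.symm
end

section
/- Let K be a henselian discrete valuation field of characteristic 0 containing a primitive p-th root of unity ζ_p, with residue field k of characteristic p, prime element π, and f_K = p·v(p)/(p−1). For x in the valuation ring with reduction x̄ ∈ k, the class of the unit 1 + x·(ζ_p − 1)^p in K×/(K×)^p is trivial if and only if x̄ lies in ℘(k) = {a^p − a : a ∈ k}. Consequently x̄ ↦ [1 + x̃(ζ_p−1)^p] induces an injective homomorphism k/℘k → K×/(K×)^p whose image equals the image of the units 1 + 𝔪_K^{f_K} in K×/(K×)^p. -/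
open Finset Polynomial IsLocalRing

variable {A : Type} [CommRing A]

/-- auxiliary function: `(1+λt)^p = 1 + λ^p · hfun t` -/
noncomputable def hfun (p : ℕ) (lam w t : A) : A :=
  t ^ p + ∑ k ∈ Ico 1 p, ((p.choose k / p : ℕ) : A) * w * lam ^ (k - 1) * t ^ k

theorem hfun_spec {p : ℕ} [Fact p.Prime] {lam w : A} (hplw : (p : A) = lam ^ (p - 1) * w)
    (t : A) : (1 + lam * t) ^ p = 1 + lam ^ p * hfun p lam w t := by
  have hp : p.Prime := Fact.out
  have h2 : 2 ≤ p := hp.two_le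
  have expand : (lam * t + 1) ^ p
      = ∑ k ∈ range (p + 1), (lam * t) ^ k * 1 ^ (p - k) * (p.choose k) := add_pow _ _ _
  simp only [one_pow, mul_one] at expand
  have split1 : ∑ k ∈ range (p + 1), (lam * t) ^ k * (p.choose k : A)
      = 1 + ((∑ k ∈ Ico 1 p, (lam * t) ^ k * (p.choose k : A)) + (lam * t) ^ p) := by
    rw [range_eq_Ico, Finset.sum_eq_sum_Ico_succ_bot (by omega)]
    rw [show (0:ℕ)+1 = 1 by rfl, Finset.sum_Ico_succ_top (show 1 ≤ p by omega)]
    simp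
  have term : ∀ k ∈ Ico 1 p, lam ^ p * (((p.choose k / p : ℕ) : A) * w * lam ^ (k - 1) * t ^ k)
      = (lam * t) ^ k * (p.choose k : A) := by
    intro k hk
    simp only [mem_Ico] at hk
    obtain ⟨k', rfl⟩ : ∃ k', k = k' + 1 := ⟨k - 1, by omega⟩
    have hdvd : p ∣ p.choose (k' + 1) := hp.dvd_choose_self (by omega) hk.2
    have hQ : ((p.choose (k' + 1) / p : ℕ) : A) * (p : A) = (p.choose (k' + 1) : A) := by
      rw [← Nat.cast_mul, Nat.div_mul_cancel hdvd]
    have e1 : lam ^ p = lam ^ (p - 1) * lam := by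
      conv_lhs => rw [show p = (p - 1) + 1 by omega]
      rw [pow_succ]
    rw [e1]
    simp only [Nat.add_sub_cancel]
    calc lam ^ (p - 1) * lam * (((p.choose (k' + 1) / p : ℕ) : A) * w * lam ^ k' * t ^ (k' + 1))
        = ((p.choose (k' + 1) / p : ℕ) : A) * (lam ^ (p - 1) * w) * (lam * lam ^ k' * t ^ (k' + 1)) := by ring
      _ = (lam * t) ^ (k' + 1) * (p.choose (k' + 1) : A) := by
          rw [← hplw, mul_comm lam (lam ^ k'), ← pow_succ, mul_pow]
          rw [mul_comm (((p.choose (k' + 1) / p : ℕ) : A)) ((p : A)), mul_comm] at hQ ⊢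
          rw [← hQ]; ring
  rw [show (1 : A) + lam * t = lam * t + 1 by ring, expand, split1, hfun]
  rw [mul_add, Finset.mul_sum, mul_pow]
  rw [Finset.sum_congr rfl term]
  ring

theorem hfun_res {p : ℕ} [Fact p.Prime] [IsLocalRing A] {lam w : A}
    (hlam : residue A lam = 0) (hw : residue A w = -1) (t : A) :
    residue A (hfun p lam w t) = (residue A t) ^ p - residue A t := by
  have hp : p.Prime := Fact.out
  have h2 : 2 ≤ p := hp.two_le
  rw [hfun, map_add, map_pow, map_sum]
  have : ∑ k ∈ Ico 1 p, residue A (((p.choose k / p : ℕ) : A) * w * lam ^ (k - 1) * t ^ k)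
      = - residue A t := by
    rw [Finset.sum_eq_single 1]
    · simp [Nat.div_self hp.pos, hw]
    · intro k hk hk1
      simp only [mem_Ico] at hk
      have : k - 1 ≠ 0 := by omega
      simp only [map_mul, map_pow, hlam, zero_pow this, mul_zero, zero_mul]
    · intro h
      exact absurd (Finset.mem_Ico.mpr ⟨le_refl 1, by omega⟩) h
  rw [this]; ring

theorem isUnit_of_res_ne [IsLocalRing A] {a : A} (h : residue A a ≠ 0) : IsUnit a := by
  by_contra hu
  exact h (Ideal.Quotient.eq_zero_iff_mem.mpr ((IsLocalRing.mem_maximalIdeal a).mpr hu))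

theorem res_unit_one [IsLocalRing A] {v : A} (hv : IsUnit v) (h : residue A v = 1) :
    residue A ((hv.unit⁻¹ : Aˣ) : A) = 1 := by
  have h1 : residue A (v * ((hv.unit⁻¹ : Aˣ) : A)) = 1 := by
    rw [hv.mul_val_inv]; exact map_one _
  rw [map_mul, h, one_mul] at h1
  exact h1

theorem residue_field_pow_eq {p : ℕ} [Fact p.Prime] [IsLocalRing A]
    [CharP (ResidueField A) p] {x : ResidueField A} (h : x ^ p = 1) : x = 1 := by
  have h2 : (x - 1) ^ p = x ^ p - 1 ^ p := sub_pow_char x 1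
  rw [h, one_pow, sub_self] at h2
  exact sub_eq_zero.mp
    (pow_eq_zero_iff (n := p) (by have := (Fact.out : p.Prime).pos; omega) |>.mp h2)

theorem res_zeta_sub_one {p : ℕ} [Fact p.Prime] [IsLocalRing A]
    [CharP (ResidueField A) p] {ζ : A} (hζ : IsPrimitiveRoot ζ p) :
    residue A (ζ - 1) = 0 := by
  have h1 : (residue A ζ) ^ p = 1 := by rw [← map_pow, hζ.pow_eq_one, map_one]
  rw [map_sub, map_one, residue_field_pow_eq h1, sub_self]

theorem exists_w {p : ℕ} [Fact p.Prime] [IsDomain A] [IsLocalRing A]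
    [CharP (ResidueField A) p] {ζ : A} (hζ : IsPrimitiveRoot ζ p) (hlam : ζ - 1 ≠ 0) :
    ∃ w : A, (p : A) = (ζ - 1) ^ (p - 1) * w ∧ IsUnit w ∧ residue A w = -1 := by
  have hp : p.Prime := Fact.out
  have h2 : 2 ≤ p := hp.two_le
  set lam := ζ - 1 with hlamdef
  have hres : residue A lam = 0 := res_zeta_sub_one hζ
  have expand : (lam + 1) ^ p = ∑ k ∈ range (p + 1), lam ^ k * 1 ^ (p - k) * (p.choose k) :=
    add_pow _ _ _
  simp only [one_pow, mul_one] at expand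
  have hz : (lam + 1) ^ p = 1 := by
    rw [show lam + 1 = ζ by rw [hlamdef]; ring, hζ.pow_eq_one]
  rw [hz] at expand
  have expand2 : ∑ k ∈ Ico 1 (p+1), lam ^ k * (p.choose k : A) = 0 := by
    have := expand
    rw [range_eq_Ico, Finset.sum_eq_sum_Ico_succ_bot (by omega)] at this
    simp only [pow_zero, Nat.choose_zero_right, Nat.cast_one, one_mul] at this
    rw [show (0:ℕ)+1 = 1 by rfl] at this
    linear_combination -this
  have factored : lam * (∑ k ∈ Ico 1 (p+1), lam ^ (k-1) * (p.choose k : A)) = 0 := by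
    rw [Finset.mul_sum, ← expand2]
    apply Finset.sum_congr rfl
    intro k hk
    simp only [mem_Ico] at hk
    obtain ⟨k', rfl⟩ : ∃ k', k = k' + 1 := ⟨k - 1, by omega⟩
    rw [Nat.add_sub_cancel, ← mul_assoc, ← pow_succ']
  have S0 : ∑ k ∈ Ico 1 (p+1), lam ^ (k-1) * (p.choose k : A) = 0 :=
    (mul_eq_zero.mp factored).resolve_left hlam
  -- peel top (k = p) and bottom (k = 1)
  rw [Finset.sum_Ico_succ_top (show 1 ≤ p by omega)] at S0
  rw [Finset.sum_eq_sum_Ico_succ_bot (by omega : 1 < p)] at S0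
  simp only [Nat.sub_self, Nat.choose_self, Nat.cast_one, mul_one, pow_zero,
    Nat.choose_one_right, one_mul] at S0
  -- S0 : (p:A) + ∑ k ∈ Ico 2 p, lam^(k-1) * choose + lam^(p-1) = 0
  set v : A := 1 + ∑ k ∈ Ico (1+1) p, lam ^ (k-1) * ((p.choose k / p : ℕ) : A) with hvdef
  have hpv : (p : A) * v = - lam ^ (p - 1) := by
    rw [hvdef, mul_add, mul_one, Finset.mul_sum]
    have : ∀ k ∈ Ico (1+1) p, (p:A) * (lam ^ (k-1) * ((p.choose k / p : ℕ) : A))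
        = lam ^ (k-1) * (p.choose k : A) := by
      intro k hk
      simp only [mem_Ico] at hk
      have hdvd : p ∣ p.choose k := hp.dvd_choose_self (by omega) hk.2
      rw [show (p:A) * (lam ^ (k-1) * ((p.choose k / p : ℕ) : A))
          = lam ^ (k-1) * (((p.choose k / p : ℕ) : A) * (p:A)) by ring,
        ← Nat.cast_mul, Nat.div_mul_cancel hdvd]
    rw [Finset.sum_congr rfl this]
    linear_combination S0
  have hresv : residue A v = 1 := by
    rw [hvdef, map_add, map_one, map_sum]
    have : ∀ k ∈ Ico (1+1) p, residue A (lam ^ (k-1) * ((p.choose k / p : ℕ) : A)) = 0 := by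
      intro k hk
      simp only [mem_Ico] at hk
      have : k - 1 ≠ 0 := by omega
      rw [map_mul, map_pow, hres, zero_pow this, zero_mul]
    rw [Finset.sum_congr rfl this]
    simp
  have hv : IsUnit v := isUnit_of_res_ne (by rw [hresv]; exact one_ne_zero)
  refine ⟨-((hv.unit⁻¹ : Aˣ) : A), ?_, (hv.unit⁻¹).isUnit.neg, ?_⟩
  · have hvv : v * ((hv.unit⁻¹ : Aˣ) : A) = 1 := hv.mul_val_inv
    calc (p : A) = (p : A) * (v * ((hv.unit⁻¹ : Aˣ) : A)) := by rw [hvv, mul_one]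
      _ = ((p:A) * v) * ((hv.unit⁻¹ : Aˣ) : A) := by ring
      _ = lam ^ (p-1) * -((hv.unit⁻¹ : Aˣ) : A) := by rw [hpv]; ring
  · rw [map_neg, res_unit_one hv hresv]

theorem hensel_step {p : ℕ} [Fact p.Prime] [HenselianLocalRing A] {lam w : A}
    (hw : IsUnit w) {s : A} (hs : s ∈ maximalIdeal A) :
    ∃ t : A, hfun p lam w t = s := by
  have hp : p.Prime := Fact.out
  have h2 : 2 ≤ p := hp.two_le
  set q : A[X] := (∑ k ∈ Ico 1 p, C (((p.choose k / p : ℕ) : A) * w * lam ^ (k-1)) * X ^ k)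
      - C s with hq
  set g : A[X] := X ^ p + q with hg
  have heval : ∀ t : A, g.eval t = hfun p lam w t - s := by
    intro t
    simp only [hg, hq, hfun, eval_add, eval_sub, eval_pow, eval_X, eval_C,
      eval_finset_sum, eval_mul]
    ring
  have hmonic : g.Monic := by
    apply monic_X_pow_add
    have hd1 : (∑ k ∈ Ico 1 p, C (((p.choose k / p : ℕ) : A) * w * lam ^ (k-1)) * X ^ k).degree
        ≤ ((p - 1 : ℕ) : WithBot ℕ) := by
      apply le_trans (Polynomial.degree_sum_le _ _)
      apply Finset.sup_le
      intro k hk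
      simp only [mem_Ico] at hk
      exact le_trans (Polynomial.degree_C_mul_X_pow_le _ _) (by exact_mod_cast (by omega : k ≤ p - 1))
    have hd2 : q.degree ≤ ((p - 1 : ℕ) : WithBot ℕ) := by
      apply le_trans (Polynomial.degree_sub_le _ _)
      apply max_le hd1
      exact le_trans Polynomial.degree_C_le (by exact_mod_cast Nat.zero_le (p-1))
    apply lt_of_le_of_lt hd2
    exact_mod_cast (by omega : p - 1 < p)
  have heval0 : g.eval 0 ∈ maximalIdeal A := by
    have : g.eval 0 = -s := by
      rw [heval 0, hfun]
      have : ∑ k ∈ Ico 1 p, ((p.choose k / p : ℕ) : A) * w * lam ^ (k-1) * (0:A) ^ k = 0 := by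
        apply Finset.sum_eq_zero
        intro k hk
        simp only [mem_Ico] at hk
        rw [zero_pow (by omega : k ≠ 0), mul_zero]
      rw [this, zero_pow (by omega : p ≠ 0)]
      ring
    rw [this]
    exact neg_mem hs
  have hderiv : g.derivative.eval 0 = w := by
    rw [hg, hq]
    simp only [derivative_add, derivative_sub, derivative_C, derivative_X_pow,
      derivative_sum, derivative_C_mul_X_pow, eval_add, eval_sub, eval_mul, eval_pow,
      eval_C, eval_X, eval_finset_sum, sub_zero]
    rw [Finset.sum_eq_single 1]
    · simp [Nat.div_self hp.pos, zero_pow (show p - 1 ≠ 0 by omega)]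
    · intro k hk hk1
      simp only [mem_Ico] at hk
      rw [zero_pow (by omega : k - 1 ≠ 0), mul_zero]
    · intro h
      exact absurd (Finset.mem_Ico.mpr ⟨le_refl 1, by omega⟩) h
  obtain ⟨t, ht, -⟩ := HenselianLocalRing.is_henselian g hmonic 0 heval0
    (by rw [hderiv]; exact hw)
  refine ⟨t, ?_⟩
  have := ht
  rw [Polynomial.IsRoot, heval t] at this
  exact sub_eq_zero.mp this



/-!
STATEMENT 6: Let `K` be a henselian discrete valuation field of characteristic `0` containing
a primitive `p`-th root of unity `ζ_p`, with valuation ring `A`, residue field `k` of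
characteristic `p`, and `f_K = p·v(p)/(p-1)`.  For `x ∈ A` with reduction `x̄ ∈ k`, the class
of `1 + x·(ζ_p - 1)^p` in `K×/(K×)^p` is trivial iff `x̄ ∈ ℘(k) = {a^p - a}`.  Consequently
`x̄ ↦ [1 + x̃(ζ_p - 1)^p]` induces an injective homomorphism `k/℘k → K×/(K×)^p` whose image
is the image of the units `1 + 𝔪_K^{f_K}` in `K×/(K×)^p`.

The conclusions below state (in order): the kernel criterion; well-definedness together with
injectivity of the induced map; that it is a homomorphism; and the two inclusions between its
image and the image of `1 + 𝔪^{f_K}` (all computed inside `K×/(K×)^p`, i.e. modulo `p`-th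
powers).  Here `e` and `f` are defined by `p ~ π^e` and `(p-1)·f = p·e`.
-/
theorem statement_6
    (p : ℕ) [Fact p.Prime]
    (A : Type) [CommRing A] [IsDomain A] [IsDiscreteValuationRing A] [HenselianLocalRing A]
    (K : Type) [Field K] [Algebra A K] [IsFractionRing A K] [CharZero K]
    [CharP (IsLocalRing.ResidueField A) p]
    (ζ : A) (hζ : IsPrimitiveRoot ζ p)
    (π : A) (hπ : Irreducible π) (e f : ℕ)
    (he : Associated ((p : A)) (π ^ e)) (hf : (p - 1) * f = p * e) :
    (∀ x : A,
        (∃ y : K, algebraMap A K (1 + x * (ζ - 1) ^ p) = y ^ p) ↔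
          ∃ a : IsLocalRing.ResidueField A,
            IsLocalRing.residue A x = a ^ p - a)
      ∧ (∀ x x' : A,
          (∃ y : K, algebraMap A K (1 + x * (ζ - 1) ^ p)
              = y ^ p * algebraMap A K (1 + x' * (ζ - 1) ^ p)) ↔
            ∃ a : IsLocalRing.ResidueField A,
              IsLocalRing.residue A x - IsLocalRing.residue A x' = a ^ p - a)
      ∧ (∀ x x' : A, ∃ y : K,
          algebraMap A K ((1 + x * (ζ - 1) ^ p) * (1 + x' * (ζ - 1) ^ p))
            = y ^ p * algebraMap A K (1 + (x + x') * (ζ - 1) ^ p))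
      ∧ (∀ x : A, ∃ u : A, u - 1 ∈ (IsLocalRing.maximalIdeal A) ^ f ∧
          ∃ y : K, algebraMap A K (1 + x * (ζ - 1) ^ p) = y ^ p * algebraMap A K u)
      ∧ (∀ u : A, u - 1 ∈ (IsLocalRing.maximalIdeal A) ^ f →
          ∃ x : A, ∃ y : K,
            algebraMap A K u = y ^ p * algebraMap A K (1 + x * (ζ - 1) ^ p)) := by
  classical
  have hp : p.Prime := Fact.out
  have h2 : 2 ≤ p := hp.two_le
  set lam : A := ζ - 1 with hlamdef
  have hlamne : lam ≠ 0 := sub_ne_zero.mpr (hζ.ne_one hp.one_lt)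
  have hres0 : residue A lam = 0 := res_zeta_sub_one hζ
  obtain ⟨w, hplw, hwu, hwres⟩ := exists_w hζ hlamne
  rw [← hlamdef] at hplw
  have hlam_mem : lam ∈ maximalIdeal A := Ideal.Quotient.eq_zero_iff_mem.mp hres0
  have hlamp_mem : lam ^ p ∈ maximalIdeal A := by
    rw [show p = (p - 1) + 1 by omega, pow_succ]
    exact Ideal.mul_mem_left _ _ hlam_mem
  have halg : Function.Injective (algebraMap A K) := IsFractionRing.injective A K
  obtain ⟨mil, ul, hul⟩ := IsDiscreteValuationRing.eq_unit_mul_pow_irreducible hlamne hπ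
  have hm : maximalIdeal A = Ideal.span {π} := hπ.maximalIdeal_eq
  have hπ_dvd_lam : π ∣ lam := by
    rw [hm] at hlam_mem; exact Ideal.mem_span_singleton.mp hlam_mem
  have hmil1 : 1 ≤ mil := by
    by_contra h
    have h0 : mil = 0 := by omega
    rw [h0, pow_zero, mul_one] at hul
    exact hπ.not_isUnit (isUnit_of_dvd_unit hπ_dvd_lam (hul ▸ ul.isUnit))
  have hassoc : Associated (π ^ ((p - 1) * mil)) ((p : A)) := by
    refine ⟨ul ^ (p - 1) * hwu.unit, ?_⟩
    have h1 : ((ul ^ (p - 1) * hwu.unit : Aˣ) : A) = ((ul : A)) ^ (p - 1) * w := by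
      rw [Units.val_mul, Units.val_pow_eq_pow_val, hwu.unit_spec]
    rw [h1, hplw, hul, mul_pow, ← pow_mul, mul_comm mil (p - 1)]
    ring
  have he' : e = (p - 1) * mil := by
    have h1 : Associated (π ^ e) (π ^ ((p - 1) * mil)) := he.symm.trans hassoc.symm
    exact le_antisymm ((pow_dvd_pow_iff hπ.ne_zero hπ.not_isUnit).mp h1.dvd)
      ((pow_dvd_pow_iff hπ.ne_zero hπ.not_isUnit).mp h1.symm.dvd)
  have hf' : f = p * mil := by
    have hthis := hf
    rw [he'] at hthis
    have h3 : (p - 1) * f = (p - 1) * (p * mil) := by rw [hthis]; ring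
    exact Nat.eq_of_mul_eq_mul_left (by omega) h3
  have hlamp : lam ^ p = (ul : A) ^ p * π ^ f := by
    rw [hul, mul_pow, ← pow_mul, hf', Nat.mul_comm p mil]
  have hmf : (maximalIdeal A) ^ f = Ideal.span {π ^ f} := by
    rw [hm, Ideal.span_singleton_pow]
  have hunit : ∀ z : A, IsUnit (1 + z * lam ^ p) := by
    intro z
    apply isUnit_of_res_ne
    rw [map_add, map_one, map_mul, map_pow, hres0, zero_pow (by omega : p ≠ 0), mul_zero,
      add_zero]
    exact one_ne_zero
  have hunit' : ∀ t : A, IsUnit (1 + lam * t) := by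
    intro t
    apply isUnit_of_res_ne
    rw [map_add, map_one, map_mul, hres0, zero_mul, add_zero]
    exact one_ne_zero
  have P1 : ∀ s : A, s ∈ maximalIdeal A → ∃ t : A, (1 + lam * t) ^ p = 1 + s * lam ^ p := by
    intro s hs
    obtain ⟨t, ht⟩ := hensel_step (p := p) (lam := lam) hwu hs
    exact ⟨t, by rw [hfun_spec hplw, ht]; ring⟩
  have hmul : ∀ a b : A, ∃ c : A,
      (1 + a * lam ^ p) * (1 + b * lam ^ p) = (1 + (a + b) * lam ^ p) * (1 + lam * c) ^ p := by
    intro a b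
    obtain ⟨r, hr⟩ := (hunit (a + b)).exists_right_inv
    have hs : (a * b * r) * lam ^ p ∈ maximalIdeal A := Ideal.mul_mem_left _ _ hlamp_mem
    obtain ⟨c, hc⟩ := P1 _ hs
    refine ⟨c, ?_⟩
    rw [hc]
    linear_combination (-(a * b * lam ^ p * lam ^ p)) * hr
  have hBne : ∀ x' : A, algebraMap A K (1 + x' * lam ^ p) ≠ 0 := by
    intro x' h
    exact (hunit x').ne_zero (halg (by rw [h, map_zero]))
  have hGne : ∀ c : A, algebraMap A K (1 + lam * c) ≠ 0 := by
    intro c h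
    exact (hunit' c).ne_zero (halg (by rw [h, map_zero]))
  -- PART 1
  have part1 : ∀ x : A, (∃ y : K, algebraMap A K (1 + x * lam ^ p) = y ^ p) ↔
      ∃ a : ResidueField A, residue A x = a ^ p - a := by
    intro x
    constructor
    · rintro ⟨y, hy⟩
      have hyint : IsIntegral A y :=
        ⟨X ^ p - C (1 + x * lam ^ p), monic_X_pow_sub_C _ (by omega : p ≠ 0), by
          rw [eval₂_sub, eval₂_X_pow, eval₂_C, hy, sub_self]⟩
      obtain ⟨y', hy'⟩ := IsIntegrallyClosed.isIntegral_iff.mp hyint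
      have hy'p : y' ^ p = 1 + x * lam ^ p := by
        apply halg
        rw [map_pow, hy', hy]
      have hresy : residue A y' = 1 := by
        apply residue_field_pow_eq (p := p)
        rw [← map_pow, hy'p, map_add, map_one, map_mul, map_pow, hres0,
          zero_pow (by omega : p ≠ 0), mul_zero, add_zero]
      have hcm : y' - 1 ∈ maximalIdeal A := by
        refine Ideal.Quotient.eq_zero_iff_mem.mp ?_
        show residue A (y' - 1) = 0
        rw [map_sub, map_one, hresy, sub_self]
      have hlamdvd : lam ∣ y' - 1 := by
        rcases eq_or_ne (y' - 1) 0 with hc0 | hc0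
        · rw [hc0]; exact dvd_zero lam
        obtain ⟨n, uc, hcu⟩ := IsDiscreteValuationRing.eq_unit_mul_pow_irreducible hc0 hπ
        have hn : mil ≤ n := by
          by_contra hn
          push_neg at hn
          have hexp : (y' - 1 + 1) ^ p
              = ∑ k ∈ Finset.range (p + 1), (y' - 1) ^ k * 1 ^ (p - k) * (p.choose k) :=
            add_pow _ _ _
          simp only [one_pow, mul_one] at hexp
          have hcp : (y' - 1) ^ p + ∑ k ∈ Finset.Ico 1 p, (y' - 1) ^ k * (p.choose k : A)
              = x * lam ^ p := by
            rw [show y' - 1 + 1 = y' by ring, hy'p] at hexp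
            rw [Finset.range_eq_Ico, Finset.sum_eq_sum_Ico_succ_bot (by omega)] at hexp
            rw [show (0 : ℕ) + 1 = 1 by rfl,
              Finset.sum_Ico_succ_top (show 1 ≤ p by omega)] at hexp
            simp only [pow_zero, Nat.choose_zero_right, Nat.cast_one, one_mul,
              Nat.choose_self, mul_one] at hexp
            linear_combination -hexp
          have hpm : p * mil = (p - 1) * mil + mil := by
            conv_lhs => rw [show p = (p - 1) + 1 by omega]
            ring
          set D := π ^ ((p - 1) * mil + n) with hD
          have hDx : D ∣ x * lam ^ p := by
            have h1 : D ∣ π ^ (p * mil) := pow_dvd_pow _ (by omega)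
            obtain ⟨d, hd⟩ := h1
            exact ⟨x * (ul : A) ^ p * d, by rw [hlamp, hf', hd]; ring⟩
          have hDsum : D ∣ ∑ k ∈ Finset.Ico 1 p, (y' - 1) ^ k * (p.choose k : A) := by
            apply Finset.dvd_sum
            intro k hk
            simp only [Finset.mem_Ico] at hk
            obtain ⟨b, hb⟩ := hp.dvd_choose_self (by omega) hk.2
            have hck : (y' - 1) ^ k = (uc : A) ^ k * π ^ (n * k) := by
              rw [hcu, mul_pow, ← pow_mul]
            obtain ⟨d, hd⟩ : π ^ n ∣ π ^ (n * k) :=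
              pow_dvd_pow _ (by nlinarith [hk.1])
            refine ⟨(uc : A) ^ k * d * ((ul : A) ^ (p - 1) * w * b), ?_⟩
            rw [hck, hd, hb]
            push_cast
            rw [hplw, hul, mul_pow, ← pow_mul, mul_comm mil (p - 1), hD, pow_add]
            ring
          have hDcp : D ∣ (y' - 1) ^ p := by
            have h11 := dvd_sub hDx hDsum
            have h3 : (y' - 1) ^ p
                = x * lam ^ p - ∑ k ∈ Finset.Ico 1 p, (y' - 1) ^ k * (p.choose k : A) := by
              linear_combination hcp
            rw [h3]; exact h11
          have hDpn : D ∣ π ^ (p * n) := by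
            have h4 : ((uc⁻¹ : Aˣ) : A) ^ p * (y' - 1) ^ p = π ^ (p * n) := by
              rw [hcu, mul_pow, ← mul_assoc, ← mul_pow, Units.inv_mul, one_pow, one_mul,
                ← pow_mul, mul_comm n p]
            rw [← h4]
            exact Dvd.dvd.mul_left hDcp _
          have hineq : (p - 1) * mil + n ≤ p * n :=
            (pow_dvd_pow_iff hπ.ne_zero hπ.not_isUnit).mp hDpn
          have hpn : p * n = (p - 1) * n + n := by
            conv_lhs => rw [show p = (p - 1) + 1 by omega]
            ring
          have h9 : (p - 1) * mil ≤ (p - 1) * n := by omega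
          have h10 : mil ≤ n := Nat.le_of_mul_le_mul_left h9 (by omega)
          omega
        obtain ⟨d, hdn⟩ : π ^ mil ∣ π ^ n := pow_dvd_pow _ hn
        refine ⟨((ul⁻¹ : Aˣ) : A) * (uc : A) * d, ?_⟩
        rw [hcu, hdn, hul]
        have h5 : (ul : A) * ((ul⁻¹ : Aˣ) : A) = 1 := Units.mul_inv _
        linear_combination (-((uc : A) * π ^ mil * d)) * h5
      obtain ⟨t, htc⟩ := hlamdvd
      have hy'e : y' = 1 + lam * t := by rw [← htc]; ring
      have hx : x = hfun p lam w t := by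
        have h6 : (1 + lam * t) ^ p = 1 + lam ^ p * hfun p lam w t := hfun_spec hplw t
        rw [← hy'e, hy'p] at h6
        have h7 : lam ^ p * (x - hfun p lam w t) = 0 := by linear_combination h6
        rcases mul_eq_zero.mp h7 with h | h
        · exact absurd h (pow_ne_zero _ hlamne)
        · linear_combination h
      exact ⟨residue A t, by rw [hx, hfun_res hres0 hwres]⟩
    · rintro ⟨a, ha⟩
      obtain ⟨t, ht0⟩ := Ideal.Quotient.mk_surjective a
      have ht : residue A t = a := ht0
      have hz1 : (1 + lam * t) ^ p = 1 + lam ^ p * hfun p lam w t := hfun_spec hplw t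
      set z := hfun p lam w t with hzdef
      have hz2 : residue A z = residue A x := by
        rw [hzdef, hfun_res hres0 hwres, ht, ha]
      have hxz : x - z ∈ maximalIdeal A := by
        refine Ideal.Quotient.eq_zero_iff_mem.mp ?_
        show residue A (x - z) = 0
        rw [map_sub, hz2, sub_self]
      obtain ⟨r, hr⟩ := (hunit z).exists_right_inv
      have hs : (x - z) * r ∈ maximalIdeal A := Ideal.mul_mem_right _ _ hxz
      obtain ⟨t2, ht2⟩ := P1 _ hs
      refine ⟨algebraMap A K ((1 + lam * t) * (1 + lam * t2)), ?_⟩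
      have hA : (1 + x * lam ^ p) = ((1 + lam * t) * (1 + lam * t2)) ^ p := by
        rw [mul_pow, hz1, ht2]
        linear_combination (-(x - z) * lam ^ p) * hr
      rw [hA, map_pow]
  -- PART 3 (proved before part 2, which uses hmul directly)
  have part3 : ∀ x x' : A, ∃ y : K,
      algebraMap A K ((1 + x * lam ^ p) * (1 + x' * lam ^ p))
        = y ^ p * algebraMap A K (1 + (x + x') * lam ^ p) := by
    intro x x'
    obtain ⟨c, hc⟩ := hmul x x'
    refine ⟨algebraMap A K (1 + lam * c), ?_⟩
    rw [← map_pow, ← map_mul, hc, mul_comm]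
  -- PART 2
  have part2 : ∀ x x' : A,
      (∃ y : K, algebraMap A K (1 + x * lam ^ p)
          = y ^ p * algebraMap A K (1 + x' * lam ^ p)) ↔
        ∃ a : ResidueField A, residue A x - residue A x' = a ^ p - a := by
    intro x x'
    obtain ⟨c, hc⟩ := hmul (x - x') x'
    rw [show x - x' + x' = x by ring] at hc
    have hcK := congrArg (algebraMap A K) hc
    rw [map_mul, map_mul, map_pow] at hcK
    constructor
    · rintro ⟨y, hy⟩
      rw [hy] at hcK
      have h8 : algebraMap A K (1 + (x - x') * lam ^ p)
          = (y * algebraMap A K (1 + lam * c)) ^ p := by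
        apply mul_right_cancel₀ (hBne x')
        rw [hcK, mul_pow]
        ring
      obtain ⟨a, ha⟩ := (part1 (x - x')).mp ⟨_, h8⟩
      exact ⟨a, by rw [← ha, map_sub]⟩
    · rintro ⟨a, ha⟩
      obtain ⟨y0, hy0⟩ := (part1 (x - x')).mpr ⟨a, by rw [map_sub, ha]⟩
      refine ⟨y0 * (algebraMap A K (1 + lam * c))⁻¹, ?_⟩
      rw [hy0] at hcK
      rw [mul_pow, inv_pow]
      have hGp : (algebraMap A K (1 + lam * c)) ^ p ≠ 0 := pow_ne_zero _ (hGne c)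
      have hinv : ((algebraMap A K (1 + lam * c)) ^ p)⁻¹ * (algebraMap A K (1 + lam * c)) ^ p
          = 1 := inv_mul_cancel₀ hGp
      apply mul_right_cancel₀ hGp
      rw [← hcK]
      linear_combination (-(y0 ^ p * algebraMap A K (1 + x' * lam ^ p))) * hinv
  -- PART 4
  have part4 : ∀ x : A, ∃ u : A, u - 1 ∈ (maximalIdeal A) ^ f ∧
      ∃ y : K, algebraMap A K (1 + x * lam ^ p) = y ^ p * algebraMap A K u := by
    intro x
    refine ⟨1 + x * lam ^ p, ?_, 1, by rw [one_pow, one_mul]⟩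
    rw [add_sub_cancel_left, hmf]
    exact Ideal.mem_span_singleton.mpr ⟨x * (ul : A) ^ p, by rw [hlamp]; ring⟩
  -- PART 5
  have part5 : ∀ u : A, u - 1 ∈ (maximalIdeal A) ^ f →
      ∃ x : A, ∃ y : K, algebraMap A K u = y ^ p * algebraMap A K (1 + x * lam ^ p) := by
    intro u hu
    rw [hmf, Ideal.mem_span_singleton] at hu
    obtain ⟨d, hd⟩ := hu
    refine ⟨((ul⁻¹ : Aˣ) : A) ^ p * d, 1, ?_⟩
    rw [one_pow, one_mul]
    congr 1
    have h6 : ((ul⁻¹ : Aˣ) : A) ^ p * (ul : A) ^ p = 1 := by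
      rw [← mul_pow, Units.inv_mul, one_pow]
    rw [hlamp]
    linear_combination hd - (d * π ^ f) * h6
  exact ⟨part1, part2, part3, part4, part5⟩
end
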